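/- Let b : [0,T] × ℝ^d → ℝ^d be bounded Borel and let η be a finite signed Borel measure on C([0,T]; ℝ^d) concentrated on the set Γ_b of solutions of γ'(t) = b(t, γ(t)). Define μ_t := (e_t)_♯ η where e_t(γ) = γ(t). Then (μ_t) solves ∂_t μ_t + div(b μ_t) = 0 in the sense of distributions with initial datum μ₀ = (e₀)_♯ η. -/

import Mathlib

open MeasureTheory Set Function Filter Metric Topology

section aux
variable {E : Type*} [NormedAddCommGroup E] [NormedSpace ℝ E] [CompleteSpace E]
  [MeasurableSpace E] [BorelSpace E] [SecondCountableTopology E]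

lemma bdd_integrableOn {v : ℝ → E} {M : ℝ} (hv : Measurable v)
    (hM : ∀ s, ‖v s‖ ≤ M) {s : Set ℝ} (hs : volume s < ⊤) :
    IntegrableOn v s (volume : Measure ℝ) :=
  Integrable.mono' (integrableOn_const hs.ne)
    hv.aestronglyMeasurable (ae_of_all _ hM)

lemma bdd_locallyIntegrable {v : ℝ → E} {M : ℝ} (hv : Measurable v)
    (hM : ∀ s, ‖v s‖ ≤ M) : LocallyIntegrable v (volume : Measure ℝ) := fun x =>
  ⟨Icc (x-1) (x+1), Icc_mem_nhds (by linarith) (by linarith),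
    bdd_integrableOn hv hM isCompact_Icc.measure_lt_top⟩

lemma bdd_intervalIntegrable {v : ℝ → E} {M : ℝ} (hv : Measurable v)
    (hM : ∀ s, ‖v s‖ ≤ M) (a b : ℝ) : IntervalIntegrable v volume a b :=
  intervalIntegrable_iff.2 (bdd_integrableOn hv hM measure_Ioc_lt_top)

lemma ae_hasDerivAt_primitive {v : ℝ → E} {M : ℝ} (hv : Measurable v)
    (hM : ∀ s, ‖v s‖ ≤ M) :
    ∀ᵐ t, HasDerivAt (fun u => ∫ s in (0:ℝ)..u, v s) (v t) t := by
  have hloc : LocallyIntegrable v volume := bdd_locallyIntegrable hv hM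
  have hii : ∀ a b : ℝ, IntervalIntegrable v volume a b := bdd_intervalIntegrable hv hM
  filter_upwards [(Besicovitch.vitaliFamily (volume : Measure ℝ)).ae_tendsto_average_norm_sub
    hloc] with t ht
  have ht' : Tendsto (fun r : ℝ => ⨍ y in closedBall t r, ‖v y - v t‖) (𝓝[>] 0) (𝓝 0) :=
    ht.comp (Besicovitch.tendsto_filterAt volume t)
  rw [hasDerivAt_iff_isLittleO, Asymptotics.isLittleO_iff]
  intro ε hε
  have hev : ∀ᶠ r in 𝓝[>] (0:ℝ), ⨍ y in closedBall t r, ‖v y - v t‖ < ε/2 := by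
    have := ht' (Iio_mem_nhds (by positivity : (0:ℝ) < ε/2))
    exact this
  rcases (nhdsGT_basis (0:ℝ)).eventually_iff.1 hev with ⟨δ, hδ0, hδ⟩
  filter_upwards [Metric.ball_mem_nhds t (half_pos hδ0)] with u hu
  rcases eq_or_ne u t with rfl | hut
  · simp
  set r : ℝ := |u - t| with hr
  have hr0 : 0 < r := abs_pos.2 (sub_ne_zero.2 hut)
  have hrδ : r < δ := by
    have := mem_ball_iff_norm.1 hu
    rw [Real.norm_eq_abs] at this; linarith [this]
  have havg : ⨍ y in closedBall t r, ‖v y - v t‖ < ε/2 := hδ ⟨hr0, hrδ⟩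
  have h1 : (∫ s in (0:ℝ)..u, v s) - (∫ s in (0:ℝ)..t, v s) = ∫ s in t..u, v s :=
    intervalIntegral.integral_interval_sub_left (hii 0 u) (hii 0 t)
  have h2 : (u - t) • v t = ∫ _ in t..u, v t := (intervalIntegral.integral_const (v t)).symm
  have h3 : (∫ s in (0:ℝ)..u, v s) - (∫ s in (0:ℝ)..t, v s) - (u - t) • v t
      = ∫ s in t..u, (v s - v t) := by
    rw [h1, h2, intervalIntegral.integral_sub (hii t u) intervalIntegrable_const]
  have hsub : Set.uIoc t u ⊆ closedBall t r := by
    intro y hy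
    rcases le_or_gt t u with h | h
    · rw [uIoc_of_le h] at hy
      rw [mem_closedBall, Real.dist_eq, abs_le, hr, abs_of_nonneg (by linarith : (0:ℝ) ≤ u - t)]
      constructor <;> [linarith [hy.1]; linarith [hy.2]]
    · rw [uIoc_of_ge h.le] at hy
      rw [mem_closedBall, Real.dist_eq, abs_le, hr, abs_of_nonpos (by linarith : u - t ≤ 0)]
      constructor <;> [linarith [hy.1]; linarith [hy.2]]
  have hIcb : IntegrableOn (fun y => ‖v y - v t‖) (closedBall t r) volume := by
    refine (Integrable.sub (bdd_integrableOn hv hM measure_closedBall_lt_top)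
      (integrableOn_const measure_closedBall_lt_top.ne)).norm
  have h4 : ‖∫ s in t..u, (v s - v t)‖ ≤ ∫ y in closedBall t r, ‖v y - v t‖ := by
    refine (intervalIntegral.norm_integral_le_integral_norm_uIoc).trans ?_
    refine setIntegral_mono_set hIcb (ae_of_all _ fun y => norm_nonneg _) (ae_of_all _ hsub)
  have h5 : ∫ y in closedBall t r, ‖v y - v t‖
      = (volume (closedBall t r)).toReal • ⨍ y in closedBall t r, ‖v y - v t‖ :=
    (measure_smul_setAverage _ measure_closedBall_lt_top.ne).symm
  have h6 : (volume (closedBall t r)).toReal = 2 * r := by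
    rw [Real.volume_closedBall, ENNReal.toReal_ofReal (by linarith)]
  rw [h3]
  calc ‖∫ s in t..u, (v s - v t)‖ ≤ (2 * r) * (⨍ y in closedBall t r, ‖v y - v t‖) := by
        calc ‖∫ s in t..u, (v s - v t)‖ ≤ ∫ y in closedBall t r, ‖v y - v t‖ := h4
          _ = 2 * r * ⨍ y in closedBall t r, ‖v y - v t‖ := by rw [h5, h6]; simp [smul_eq_mul]
    _ ≤ (2 * r) * (ε/2) := by
        apply mul_le_mul_of_nonneg_left havg.le (by linarith)
    _ = ε * r := by ring
    _ ≤ ε * ‖u - t‖ := by rw [Real.norm_eq_abs]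

end aux

section curve
variable {E : Type*} [NormedAddCommGroup E] [NormedSpace ℝ E] [CompleteSpace E]
  [MeasurableSpace E] [BorelSpace E] [SecondCountableTopology E]

lemma integral_along_curve
    {Φ : ℝ × E → ℝ} (hΦ : ContDiff ℝ 1 Φ) (hsupp : HasCompactSupport Φ)
    {T : ℝ} (hT : 0 ≤ T) (hΦT : ∀ x : E, Φ (T, x) = 0)
    {v : ℝ → E} {M : ℝ} (hv : Measurable v) (hM : ∀ s, ‖v s‖ ≤ M) (x0 : E) :
    ∫ t in (0:ℝ)..T, (fderiv ℝ Φ (t, x0 + ∫ s in (0:ℝ)..t, v s)) (1, v t)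
      = -(Φ (0, x0)) := by
  have hM0 : 0 ≤ M := le_trans (norm_nonneg (v 0)) (hM 0)
  obtain ⟨C, hC⟩ : ∃ C, ∀ p, ‖fderiv ℝ Φ p‖ ≤ C :=
    (hsupp.fderiv (𝕜 := ℝ)).exists_bound_of_continuous (hΦ.continuous_fderiv one_ne_zero)
  have hC0 : 0 ≤ C := le_trans (norm_nonneg _) (hC (0, x0))
  set X : ℝ → E := fun t => x0 + ∫ s in (0:ℝ)..t, v s with hX
  have hii : ∀ a b : ℝ, IntervalIntegrable v volume a b := bdd_intervalIntegrable hv hM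
  have hXcont : Continuous X :=
    continuous_const.add (intervalIntegral.continuous_primitive hii 0)
  have hΦdiff : Differentiable ℝ Φ := hΦ.differentiable one_ne_zero
  set f : ℝ → ℝ := fun t => Φ (t, X t) with hf
  have hfc : Continuous f := hΦ.continuous.comp (continuous_id.prodMk hXcont)
  set g : ℝ → ℝ := fun t => (fderiv ℝ Φ (t, X t)) (1, v t) with hg
  set K : ℝ := C * (1 + M) with hK
  have hK0 : 0 ≤ K := by positivity
  -- a.e. derivative of f
  have hfd : ∀ᵐ t, HasDerivAt f (g t) t := by
    filter_upwards [ae_hasDerivAt_primitive hv hM] with t ht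
    have hXd : HasDerivAt X (v t) t := ht.const_add x0
    have hc : HasDerivAt (fun t => (t, X t)) ((1:ℝ), v t) t := (hasDerivAt_id t).prodMk hXd
    exact (hΦdiff (t, X t)).hasFDerivAt.comp_hasDerivAt t hc
  -- Lipschitz bound on f
  have hΦlip : ∀ p q : ℝ × E, ‖Φ p - Φ q‖ ≤ C * ‖p - q‖ := fun p q =>
    Convex.norm_image_sub_le_of_norm_fderiv_le (fun x _ => hΦdiff x)
      (fun x _ => hC x) convex_univ (mem_univ q) (mem_univ p)
  have hXlip : ∀ a c : ℝ, ‖X a - X c‖ ≤ M * |a - c| := by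
    intro a c
    have : X a - X c = ∫ s in c..a, v s := by
      simp only [hX, add_sub_add_left_eq_sub]
      exact intervalIntegral.integral_interval_sub_left (hii 0 a) (hii 0 c)
    rw [this]
    exact intervalIntegral.norm_integral_le_of_norm_le_const (fun x _ => hM x)
  have hflip : ∀ a c : ℝ, ‖f a - f c‖ ≤ K * |a - c| := by
    intro a c
    refine (hΦlip (a, X a) (c, X c)).trans ?_
    have hnorm : ‖((a, X a) : ℝ × E) - (c, X c)‖ ≤ (1 + M) * |a - c| := by
      rw [Prod.mk_sub_mk, Prod.norm_def]
      refine max_le ?_ ?_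
      · simp only [Real.norm_eq_abs]; nlinarith [abs_nonneg (a - c)]
      · refine (hXlip a c).trans ?_; nlinarith [abs_nonneg (a - c)]
    calc C * ‖((a, X a) : ℝ × E) - (c, X c)‖ ≤ C * ((1 + M) * |a - c|) :=
          mul_le_mul_of_nonneg_left hnorm hC0
      _ = K * |a - c| := by ring
  -- g is measurable and bounded
  have hLcont : Continuous fun t => fderiv ℝ Φ (t, X t) :=
    (hΦ.continuous_fderiv one_ne_zero).comp (continuous_id.prodMk hXcont)
  have hgmeas : Measurable g := by
    have : Continuous fun p : ((ℝ × E) →L[ℝ] ℝ) × (ℝ × E) => p.1 p.2 :=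
      isBoundedBilinearMap_apply.continuous
    exact this.measurable.comp
      (hLcont.measurable.prodMk (measurable_const.prodMk hv))
  have hgbdd : ∀ t, ‖g t‖ ≤ K := by
    intro t
    calc ‖g t‖ ≤ ‖fderiv ℝ Φ (t, X t)‖ * ‖((1:ℝ), v t)‖ :=
          (fderiv ℝ Φ (t, X t)).le_opNorm _
      _ ≤ C * (1 + M) := by
          refine mul_le_mul (hC _) ?_ (norm_nonneg _) hC0
          rw [Prod.norm_def]
          exact max_le (by simpa using (by linarith : (1:ℝ) ≤ 1 + M)) ((hM t).trans (by linarith))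
  have hgint : IntegrableOn g (Ioc 0 T) volume :=
    Integrable.mono' (integrableOn_const measure_Ioc_lt_top.ne)
      hgmeas.aestronglyMeasurable (ae_of_all _ hgbdd)
  -- difference quotients
  set h : ℕ → ℝ := fun n => 1 / (n + 1) with hh
  have hhpos : ∀ n, 0 < h n := fun n => by positivity
  have hh0 : Tendsto h atTop (𝓝 0) := tendsto_one_div_add_atTop_nhds_zero_nat
  set q : ℕ → ℝ → ℝ := fun n t => (f (t + h n) - f t) / h n with hq
  have hseq : ∀ t : ℝ, Tendsto (fun n => t + h n) atTop (𝓝[≠] t) := by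
    intro t
    refine tendsto_nhdsWithin_of_tendsto_nhds_of_eventually_within _ ?_ ?_
    · simpa using tendsto_const_nhds.add hh0
    · exact Eventually.of_forall fun n => by
        simp only [mem_compl_iff, mem_singleton_iff]
        have := hhpos n; intro hcon; linarith
  have hq_tend : ∀ᵐ t ∂(volume.restrict (Ioc 0 T)),
      Tendsto (fun n => q n t) atTop (𝓝 (g t)) := by
    refine ae_restrict_of_ae ?_
    filter_upwards [hfd] with t ht
    have := (hasDerivAt_iff_tendsto_slope.1 ht).comp (hseq t)
    refine this.congr fun n => ?_
    simp only [Function.comp_apply, slope_def_field, hq]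
    rw [add_sub_cancel_left]
  have hq_bdd : ∀ n, ∀ᵐ t ∂(volume.restrict (Ioc 0 T)), ‖q n t‖ ≤ K := by
    intro n
    refine ae_of_all _ fun t => ?_
    have := hflip (t + h n) t
    simp only [hq, norm_div, Real.norm_eq_abs]
    rw [add_sub_cancel_left] at this
    rw [div_le_iff₀ (by simpa [Real.norm_eq_abs, abs_of_pos (hhpos n)] using hhpos n)]
    calc |f (t + h n) - f t| ≤ K * |h n| := by simpa [Real.norm_eq_abs] using this
      _ = K * |h n| := rfl
  have hq_cont : ∀ n, Continuous (q n) :=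
    fun n => ((hfc.comp (continuous_id.add continuous_const)).sub hfc).div_const _
  have hDCT : Tendsto (fun n => ∫ t in Ioc 0 T, q n t) atTop (𝓝 (∫ t in Ioc 0 T, g t)) := by
    refine tendsto_integral_of_dominated_convergence (fun _ => K)
      (fun n => (hq_cont n).aestronglyMeasurable) ?_ hq_bdd hq_tend
    exact integrableOn_const measure_Ioc_lt_top.ne
  have hfint : ∀ a b : ℝ, IntervalIntegrable f volume a b := fun a b =>
    hfc.intervalIntegrable a b
  have hqint : ∀ n, ∫ t in Ioc 0 T, q n t
      = ((∫ s in T..(T + h n), f s) - ∫ s in (0:ℝ)..(0 + h n), f s) / h n := by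
    intro n
    rw [← intervalIntegral.integral_of_le hT]
    have : (∫ t in (0:ℝ)..T, q n t) = ∫ t in (0:ℝ)..T, (f (t + h n) - f t) / h n := rfl
    rw [this, intervalIntegral.integral_div]
    congr 1
    have hcomp : Continuous fun x : ℝ => f (x + h n) :=
      hfc.comp (continuous_id.add continuous_const)
    rw [intervalIntegral.integral_sub (hcomp.intervalIntegrable _ _)
      (hfc.intervalIntegrable _ _),
      intervalIntegral.integral_comp_add_right f (h n)]
    have e1 : (∫ s in (0 + h n)..(T + h n), f s)
        = (∫ s in (0 + h n)..T, f s) + ∫ s in T..(T + h n), f s :=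
      (intervalIntegral.integral_add_adjacent_intervals (hfint _ _) (hfint _ _)).symm
    have e2 : (∫ s in (0:ℝ)..T, f s)
        = (∫ s in (0:ℝ)..(0 + h n), f s) + ∫ s in (0 + h n)..T, f s :=
      (intervalIntegral.integral_add_adjacent_intervals (hfint _ _) (hfint _ _)).symm
    rw [e1, e2]; ring
  have hptlim : ∀ a : ℝ, Tendsto (fun n => (∫ s in a..(a + h n), f s) / h n) atTop (𝓝 (f a)) := by
    intro a
    have hF : HasDerivAt (fun u => ∫ s in (0:ℝ)..u, f s) (f a) a :=
      intervalIntegral.integral_hasDerivAt_right (hfint 0 a)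
        (hfc.stronglyMeasurableAtFilter _ _) hfc.continuousAt
    have := (hasDerivAt_iff_tendsto_slope.1 hF).comp (hseq a)
    refine this.congr fun n => ?_
    simp only [Function.comp_apply, slope_def_field]
    rw [add_sub_cancel_left]
    congr 1
    exact intervalIntegral.integral_interval_sub_left (hfint 0 (a + h n)) (hfint 0 a)
  have hlim : Tendsto (fun n => ∫ t in Ioc 0 T, q n t) atTop (𝓝 (f T - f 0)) := by
    simp only [hqint, sub_div]
    have h2 := hptlim 0
    exact ((hptlim T).sub h2)
  have hkey : ∫ t in Ioc 0 T, g t = f T - f 0 := tendsto_nhds_unique hDCT hlim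
  have hfT : f T = 0 := hΦT (X T)
  have hf0 : f 0 = Φ (0, x0) := by
    simp only [hf, hX, intervalIntegral.integral_same, add_zero]
  rw [intervalIntegral.integral_of_le hT]
  show ∫ t in Ioc 0 T, g t = -(Φ (0, x0))
  rw [hkey, hfT, hf0, zero_sub]

end curve

section ptws
variable {E : Type*} [NormedAddCommGroup E] [NormedSpace ℝ E]

lemma partials_eq_fderiv {φ : ℝ → E → ℝ} (hφ : ContDiff ℝ 1 (Function.uncurry φ))
    (t : ℝ) (x : E) (w : E) :
    deriv (fun s => φ s x) t + (fderiv ℝ (fun y => φ t y) x) w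
      = (fderiv ℝ (Function.uncurry φ) (t, x)) (1, w) := by
  have hD := ((hφ.differentiable one_ne_zero) (t, x)).hasFDerivAt
  set D := fderiv ℝ (Function.uncurry φ) (t, x) with hDdef
  have h1 : HasDerivAt (fun s => φ s x) (D (1, 0)) t := by
    have hc : HasDerivAt (fun s : ℝ => ((s, x) : ℝ × E)) ((1:ℝ), (0:E)) t :=
      (hasDerivAt_id t).prodMk (hasDerivAt_const t x)
    exact hD.comp_hasDerivAt t hc
  have h2 : HasFDerivAt (fun y => φ t y)
      (D.comp (ContinuousLinearMap.inr ℝ ℝ E)) x := by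
    have hc : HasFDerivAt (fun y : E => ((t, y) : ℝ × E))
        (ContinuousLinearMap.inr ℝ ℝ E) x := hasFDerivAt_prodMk_right t x
    exact hD.comp x hc
  rw [h1.deriv, h2.fderiv]
  have : D (1, 0) + D (0, w) = D (1, w) := by
    rw [← map_add]; norm_num
  simpa using this

end ptws

section eval
variable {E : Type*} [NormedAddCommGroup E]
  [MeasurableSpace E] [BorelSpace E]

lemma aemeasurable_eval {η : Measure (ℝ → E)} [SFinite η] {μ : Measure ℝ}
    {B : Set (ℝ → E)} (hB : η B = 0) (hBc : ∀ γ, γ ∉ B → Continuous γ) :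
    AEMeasurable (fun p : ℝ × (ℝ → E) => p.2 p.1) (μ.prod η) := by
  set r : ℕ → ℝ → ℝ := fun n t => (⌈t * (n+1)⌉ : ℤ) / (n+1) with hr
  have hrmeas : ∀ n, Measurable fun p : ℝ × (ℝ → E) => p.2 (r n p.1) := by
    intro n
    have h1 : Measurable fun q : (ℝ → E) × ℤ => q.1 ((q.2 : ℝ) / (n+1)) :=
      measurable_from_prod_countable_left fun k =>
        (show Measurable fun γ : ℝ → E => γ ((k:ℝ)/(n+1)) from measurable_pi_apply _)
    have h2 : Measurable fun t : ℝ => ⌈t * (n+1)⌉ :=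
      Int.measurable_ceil.comp (measurable_id.mul_const _)
    exact h1.comp (measurable_snd.prodMk (h2.comp measurable_fst))
  have hrlim : ∀ t : ℝ, Tendsto (fun n => r n t) atTop (𝓝 t) := by
    intro t
    have hb1 : ∀ n : ℕ, t ≤ r n t := by
      intro n
      rw [hr, le_div_iff₀ (by positivity : (0:ℝ) < (n:ℝ)+1)]
      exact Int.le_ceil _
    have hb2 : ∀ n : ℕ, r n t ≤ t + 1/(n+1) := by
      intro n
      rw [hr, div_le_iff₀ (by positivity : (0:ℝ) < (n:ℝ)+1)]
      have := (Int.ceil_lt_add_one (t * ((n:ℝ)+1))).le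
      calc ((⌈t * ((n:ℝ)+1)⌉ : ℤ) : ℝ) ≤ t * ((n:ℝ)+1) + 1 := this
        _ = (t + 1/((n:ℝ)+1)) * ((n:ℝ)+1) := by field_simp
    refine tendsto_of_tendsto_of_tendsto_of_le_of_le tendsto_const_nhds ?_ hb1 hb2
    simpa using (tendsto_const_nhds (x := t)).add tendsto_one_div_add_atTop_nhds_zero_nat
  obtain ⟨B', hBB', hB'meas, hB'0⟩ := exists_measurable_superset_of_null hB
  have hnull : (μ.prod η) (univ ×ˢ B') = 0 := by
    rw [Measure.prod_prod, hB'0, mul_zero]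
  refine aemeasurable_of_tendsto_metrizable_ae' (fun n => (hrmeas n).aemeasurable) ?_
  refine (measure_mono_null ?_ hnull : _)
  intro p hp
  simp only [mem_setOf_eq, mem_prod, mem_univ, true_and] at hp ⊢
  by_contra hpB
  exact hp (((hBc p.2 (fun h => hpB (hBB' h))).tendsto p.1).comp (hrlim p.1))

end eval

section main
variable {E : Type*} [NormedAddCommGroup E] [NormedSpace ℝ E] [CompleteSpace E]
  [MeasurableSpace E] [BorelSpace E] [SecondCountableTopology E]

lemma per_measure {T M : ℝ} (hT : 0 ≤ T)
    {b : ℝ → E → E} (hbmeas : Measurable (Function.uncurry b))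
    (hbdd : ∀ t x, ‖b t x‖ ≤ M)
    {φ : ℝ → E → ℝ} (hφ : ContDiff ℝ 1 (Function.uncurry φ))
    (hφsupp : HasCompactSupport (Function.uncurry φ))
    (hφT : ∀ x : E, φ T x = 0)
    (η : Measure (ℝ → E)) [IsFiniteMeasure η]
    (hconc : η {γ | ¬ (Continuous γ ∧ ∀ t ∈ Icc (0:ℝ) T,
        γ t = γ 0 + ∫ s in (0:ℝ)..t, b s (γ s))} = 0) :
    IntervalIntegrable (fun t => ∫ γ, (deriv (fun s => φ s (γ t)) t
        + fderiv ℝ (fun x => φ t x) (γ t) (b t (γ t))) ∂η) volume 0 T ∧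
    (∫ t in (0:ℝ)..T, ∫ γ, (deriv (fun s => φ s (γ t)) t
        + fderiv ℝ (fun x => φ t x) (γ t) (b t (γ t))) ∂η)
      = -(∫ γ, φ 0 (γ 0) ∂η) := by
  have hM0 : 0 ≤ M := le_trans (norm_nonneg _) (hbdd 0 0)
  set Φ : ℝ × E → ℝ := Function.uncurry φ with hΦdef
  obtain ⟨C, hC⟩ : ∃ C, ∀ p, ‖fderiv ℝ Φ p‖ ≤ C :=
    (hφsupp.fderiv (𝕜 := ℝ)).exists_bound_of_continuous (hφ.continuous_fderiv one_ne_zero)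
  have hC0 : 0 ≤ C := le_trans (norm_nonneg _) (hC (0, 0))
  set Ψ : ℝ × E → ℝ := fun p => (fderiv ℝ Φ p) (1, b p.1 p.2) with hΨdef
  have hpt : ∀ (t : ℝ) (x : E), deriv (fun s => φ s x) t
      + (fderiv ℝ (fun y => φ t y) x) (b t x) = Ψ (t, x) := fun t x =>
    partials_eq_fderiv hφ t x (b t x)
  have hΨmeas : Measurable Ψ := by
    have happ : Continuous fun p : ((ℝ × E) →L[ℝ] ℝ) × (ℝ × E) => p.1 p.2 :=
      isBoundedBilinearMap_apply.continuous
    exact happ.measurable.comp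
      (((hφ.continuous_fderiv one_ne_zero).measurable).prodMk
        (measurable_const.prodMk (hbmeas.comp measurable_id)))
  have hΨbdd : ∀ p, ‖Ψ p‖ ≤ C * (1 + M) := by
    intro p
    calc ‖Ψ p‖ ≤ ‖fderiv ℝ Φ p‖ * ‖((1:ℝ), b p.1 p.2)‖ := (fderiv ℝ Φ p).le_opNorm _
      _ ≤ C * (1 + M) := by
          refine mul_le_mul (hC _) ?_ (norm_nonneg _) hC0
          rw [Prod.norm_def]
          exact max_le (by simpa using (by linarith : (1:ℝ) ≤ 1 + M))
            ((hbdd _ _).trans (by linarith))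
  -- product measure setup
  haveI : IsFiniteMeasure ((volume : Measure ℝ).restrict (Ioc 0 T)) :=
    ⟨by rw [Measure.restrict_apply_univ]; exact measure_Ioc_lt_top⟩
  set π : Measure (ℝ × (ℝ → E)) := ((volume : Measure ℝ).restrict (Ioc 0 T)).prod η with hπ
  have hBc : ∀ γ : ℝ → E, γ ∉ {γ : ℝ → E | ¬ (Continuous γ ∧ ∀ t ∈ Icc (0:ℝ) T,
      γ t = γ 0 + ∫ s in (0:ℝ)..t, b s (γ s))} → Continuous γ := by
    intro γ hγ
    simp only [mem_setOf_eq, not_not] at hγ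
    exact hγ.1
  have hev : AEMeasurable (fun p : ℝ × (ℝ → E) => p.2 p.1) π :=
    aemeasurable_eval hconc hBc
  set F : ℝ × (ℝ → E) → ℝ := fun p => Ψ (p.1, p.2 p.1) with hF
  have hFmeas : AEStronglyMeasurable F π :=
    (hΨmeas.comp_aemeasurable (measurable_fst.aemeasurable.prodMk hev)).aestronglyMeasurable
  have hFint : Integrable F π :=
    Integrable.mono' (integrable_const (C * (1 + M))) hFmeas
      (ae_of_all _ fun p => hΨbdd _)
  have hmarg : Integrable (fun t => ∫ γ, F (t, γ) ∂η)
      ((volume : Measure ℝ).restrict (Ioc 0 T)) := hFint.integral_prod_left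
  constructor
  · simp only [hpt]
    exact (intervalIntegrable_iff_integrableOn_Ioc_of_le hT).2 hmarg
  · simp only [hpt]
    rw [intervalIntegral.integral_of_le hT]
    have hswap := MeasureTheory.integral_integral_swap
      (f := fun (t : ℝ) (γ : ℝ → E) => Ψ (t, γ t)) hFint
    rw [hswap]
    have hae : ∀ᵐ γ ∂η, Continuous γ ∧ ∀ t ∈ Icc (0:ℝ) T,
        γ t = γ 0 + ∫ s in (0:ℝ)..t, b s (γ s) := ae_iff.2 hconc
    have hinner : ∀ᵐ γ ∂η, (∫ t in Ioc (0:ℝ) T, Ψ (t, γ t)) = -(φ 0 (γ 0)) := by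
      filter_upwards [hae] with γ hγ
      obtain ⟨hγc, hγode⟩ := hγ
      set v : ℝ → E := fun s => b s (γ s) with hv
      have hvmeas : Measurable v :=
        hbmeas.comp (measurable_id.prodMk hγc.measurable)
      have hvbdd : ∀ s, ‖v s‖ ≤ M := fun s => hbdd s (γ s)
      have hcongr : ∀ t ∈ Ioc (0:ℝ) T,
          Ψ (t, γ t) = (fderiv ℝ Φ (t, γ 0 + ∫ s in (0:ℝ)..t, v s)) (1, v t) := by
        intro t ht
        have := hγode t ⟨ht.1.le, ht.2⟩
        rw [hΨdef]
        simp only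
        rw [← this]
      rw [setIntegral_congr_fun measurableSet_Ioc hcongr,
        ← intervalIntegral.integral_of_le hT]
      exact integral_along_curve hφ hφsupp hT (fun x => hφT x) hvmeas hvbdd (γ 0)
    rw [integral_congr_ae hinner, integral_neg]

end main

theorem superposition_solves_continuity_equation
    (d : ℕ) (T : ℝ) (hT : 0 < T)
    (b : ℝ → EuclideanSpace ℝ (Fin d) → EuclideanSpace ℝ (Fin d))
    (hbmeas : Measurable (uncurry b)) (M : ℝ) (hbdd : ∀ t x, ‖b t x‖ ≤ M)
    -- η = ηp - ηn is a finite signed Borel measure on curves,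
    -- concentrated on the set Γ_b of integral curves of b:
    (ηp ηn : Measure (ℝ → EuclideanSpace ℝ (Fin d)))
    (hfinp : IsFiniteMeasure ηp) (hfinn : IsFiniteMeasure ηn)
    (hconc_p : ηp {γ | ¬ (Continuous γ ∧ ∀ t ∈ Icc (0:ℝ) T,
        γ t = γ 0 + ∫ s in (0:ℝ)..t, b s (γ s))} = 0)
    (hconc_n : ηn {γ | ¬ (Continuous γ ∧ ∀ t ∈ Icc (0:ℝ) T,
        γ t = γ 0 + ∫ s in (0:ℝ)..t, b s (γ s))} = 0) :
    -- μ_t := (e_t)_♯ η solves the continuity equation with datum μ₀ = (e₀)_♯ η: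
    ∀ φ : ℝ → EuclideanSpace ℝ (Fin d) → ℝ,
      ContDiff ℝ 1 (uncurry φ) → HasCompactSupport (uncurry φ) →
      tsupport (uncurry φ) ⊆ Iio T ×ˢ univ →
      ∫ t in (0:ℝ)..T,
        ((∫ γ, (deriv (fun s => φ s (γ t)) t
            + fderiv ℝ (fun x => φ t x) (γ t) (b t (γ t))) ∂ηp) -
         (∫ γ, (deriv (fun s => φ s (γ t)) t
            + fderiv ℝ (fun x => φ t x) (γ t) (b t (γ t))) ∂ηn))
      = -(((∫ γ, φ 0 (γ 0) ∂ηp)) - (∫ γ, φ 0 (γ 0) ∂ηn)) := by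
  intro φ hφ hφsupp hφsuppT
  haveI := hfinp; haveI := hfinn
  have hφT : ∀ x, φ T x = 0 := by
    intro x
    have hnot : (T, x) ∉ tsupport (uncurry φ) := by
      intro h
      have := hφsuppT h
      simp only [mem_prod, mem_Iio] at this
      exact lt_irrefl T this.1
    show uncurry φ (T, x) = 0
    exact image_eq_zero_of_notMem_tsupport hnot
  obtain ⟨hip, hep⟩ := per_measure hT.le hbmeas hbdd hφ hφsupp hφT ηp hconc_p
  obtain ⟨hin, hen⟩ := per_measure hT.le hbmeas hbdd hφ hφsupp hφT ηn hconc_n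
  rw [intervalIntegral.integral_sub hip hin, hep, hen]
  ring
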